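/- Let X be a finite nonempty set and A ∈ ℝ^{a×X}. Let Y = Y₁ × ⋯ × Y_m be a product of finite nonempty sets, let B^j ∈ ℝ^{b_j×Y_j} for j ∈ [m], and let B ∈ ℝ^{(b₁+⋯+b_m)×Y} be the matrix whose column indexed by y = (y₁,…,y_m) is the vertical concatenation (B¹_{y₁}; … ; Bᵐ_{y_m}). Then M_{A⊗B} = M_{A⊗B¹} ∗ ⋯ ∗ M_{A⊗Bᵐ}, the Hadamard product of the marginal models for the individual hidden variables. -/

import Mathlib

open scoped Classical BigOperators

section Aux

variable {X : Type*} [Fintype X] [Nonempty X] {a : ℕ} {A : Matrix (Fin a) X ℝ}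
    {m : ℕ} {Yj : Fin m → Type*} [∀ j, Fintype (Yj j)] [∀ j, Nonempty (Yj j)]
    {b : Fin m → ℕ} {Bj : ∀ j : Fin m, Matrix (Fin (b j)) (Yj j) ℝ}
    {B : Matrix ((j : Fin m) × Fin (b j)) (∀ j, Yj j) ℝ}

set_option linter.unusedSectionVars false

lemma key_sum (hB : ∀ (j : Fin m) (i : Fin (b j)) (y : ∀ j, Yj j), B ⟨j, i⟩ y = Bj j i (y j))
    (θ : Fin a × ((j : Fin m) × Fin (b j)) → ℝ) (x : X) :
    (∑ y : ∀ j, Yj j,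
        Real.exp (∑ r : Fin a × ((j : Fin m) × Fin (b j)), θ r * (A r.1 x * B r.2 y)))
      = ∏ j : Fin m, ∑ yj : Yj j,
          Real.exp (∑ r : Fin a × Fin (b j), θ (r.1, ⟨j, r.2⟩) * (A r.1 x * Bj j r.2 yj)) := by
  have hexp : ∀ y : ∀ j, Yj j,
      (∑ r : Fin a × ((j : Fin m) × Fin (b j)), θ r * (A r.1 x * B r.2 y))
        = ∑ j : Fin m, ∑ r : Fin a × Fin (b j),
            θ (r.1, ⟨j, r.2⟩) * (A r.1 x * Bj j r.2 (y j)) := by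
    intro y
    rw [Fintype.sum_prod_type, Finset.sum_comm, ← Finset.univ_sigma_univ, Finset.sum_sigma]
    simp only [hB]
    refine Finset.sum_congr rfl fun j _ => ?_
    rw [Fintype.sum_prod_type]
    exact Finset.sum_comm
  calc (∑ y : ∀ j, Yj j,
        Real.exp (∑ r : Fin a × ((j : Fin m) × Fin (b j)), θ r * (A r.1 x * B r.2 y)))
      = ∑ y : ∀ j, Yj j, ∏ j : Fin m,
          Real.exp (∑ r : Fin a × Fin (b j), θ (r.1, ⟨j, r.2⟩) * (A r.1 x * Bj j r.2 (y j))) := by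
        refine Finset.sum_congr rfl fun y _ => ?_
        rw [hexp y, Real.exp_sum]
    _ = _ := by
        rw [Finset.prod_univ_sum]
        exact (Finset.sum_congr (by simp [Fintype.piFinset_univ]) fun y _ => rfl).symm

lemma model_eq (hB : ∀ (j : Fin m) (i : Fin (b j)) (y : ∀ j, Yj j), B ⟨j, i⟩ y = Bj j i (y j))
    (θ : Fin a × ((j : Fin m) × Fin (b j)) → ℝ) :
    (fun x : X =>
        (∑ y : ∀ j, Yj j,
          Real.exp (∑ r : Fin a × ((j : Fin m) × Fin (b j)),
            θ r * (A r.1 x * B r.2 y))) /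
        ∑ x' : X, ∑ y : ∀ j, Yj j,
          Real.exp (∑ r : Fin a × ((j : Fin m) × Fin (b j)),
            θ r * (A r.1 x' * B r.2 y)))
    = fun x : X =>
        (∏ j : Fin m,
          ((∑ yj : Yj j,
            Real.exp (∑ r : Fin a × Fin (b j), θ (r.1, ⟨j, r.2⟩) * (A r.1 x * Bj j r.2 yj))) /
          ∑ x' : X, ∑ yj : Yj j,
            Real.exp (∑ r : Fin a × Fin (b j), θ (r.1, ⟨j, r.2⟩) * (A r.1 x' * Bj j r.2 yj)))) /
        ∑ x' : X, ∏ j : Fin m,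
          ((∑ yj : Yj j,
            Real.exp (∑ r : Fin a × Fin (b j), θ (r.1, ⟨j, r.2⟩) * (A r.1 x' * Bj j r.2 yj))) /
          ∑ x'' : X, ∑ yj : Yj j,
            Real.exp (∑ r : Fin a × Fin (b j), θ (r.1, ⟨j, r.2⟩) * (A r.1 x'' * Bj j r.2 yj))) := by
  set G : Fin m → X → ℝ := fun j x => ∑ yj : Yj j,
      Real.exp (∑ r : Fin a × Fin (b j), θ (r.1, ⟨j, r.2⟩) * (A r.1 x * Bj j r.2 yj)) with hGdef
  have hGpos : ∀ j x, 0 < G j x := fun j x =>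
    Finset.sum_pos (fun _ _ => Real.exp_pos _) Finset.univ_nonempty
  have hcpos : ∀ j, 0 < ∑ x' : X, G j x' := fun j =>
    Finset.sum_pos (fun x _ => hGpos j x) Finset.univ_nonempty
  have hC : (0:ℝ) < ∏ j : Fin m, ∑ x' : X, G j x' := Finset.prod_pos fun j _ => hcpos j
  have hD : (0:ℝ) < ∑ x' : X, ∏ j : Fin m, G j x' :=
    Finset.sum_pos (fun x _ => Finset.prod_pos fun j _ => hGpos j x) Finset.univ_nonempty
  funext x
  have h1 : ∀ x : X, (∑ y : ∀ j, Yj j,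
      Real.exp (∑ r : Fin a × ((j : Fin m) × Fin (b j)), θ r * (A r.1 x * B r.2 y)))
      = ∏ j : Fin m, G j x := fun x => key_sum hB θ x
  rw [h1]
  have h2 : (∑ x' : X, ∑ y : ∀ j, Yj j,
      Real.exp (∑ r : Fin a × ((j : Fin m) × (Fin (b j))), θ r * (A r.1 x' * B r.2 y)))
      = ∑ x' : X, ∏ j : Fin m, G j x' := Finset.sum_congr rfl fun x' _ => h1 x'
  rw [h2]
  have hprod : ∀ x : X, (∏ j : Fin m, G j x / ∑ x' : X, G j x')
      = (∏ j : Fin m, G j x) / ∏ j : Fin m, ∑ x' : X, G j x' := fun x =>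
    Finset.prod_div_distrib _ _
  rw [hprod]
  have hsum : (∑ x' : X, ∏ j : Fin m, G j x' / ∑ x'' : X, G j x'')
      = (∑ x' : X, ∏ j : Fin m, G j x') / ∏ j : Fin m, ∑ x' : X, G j x' := by
    rw [Finset.sum_div]
    exact Finset.sum_congr rfl fun x' _ => hprod x'
  rw [hsum, div_div_div_comm, div_self (ne_of_gt hC), div_one]

end Aux

theorem kronecker_model_eq_hadamard_product
    {X : Type*} [Fintype X] [Nonempty X] {a : ℕ} (A : Matrix (Fin a) X ℝ)
    (m : ℕ) (Yj : Fin m → Type*) [∀ j, Fintype (Yj j)] [∀ j, Nonempty (Yj j)]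
    (b : Fin m → ℕ) (Bj : ∀ j : Fin m, Matrix (Fin (b j)) (Yj j) ℝ)
    (B : Matrix ((j : Fin m) × Fin (b j)) (∀ j, Yj j) ℝ)
    (hB : ∀ (j : Fin m) (i : Fin (b j)) (y : ∀ j, Yj j), B ⟨j, i⟩ y = Bj j i (y j)) :
    {p : X → ℝ | ∃ θ : Fin a × ((j : Fin m) × Fin (b j)) → ℝ,
      p = fun x =>
        (∑ y : ∀ j, Yj j,
          Real.exp (∑ r : Fin a × ((j : Fin m) × Fin (b j)),
            θ r * (A r.1 x * B r.2 y))) /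
        ∑ x' : X, ∑ y : ∀ j, Yj j,
          Real.exp (∑ r : Fin a × ((j : Fin m) × Fin (b j)),
            θ r * (A r.1 x' * B r.2 y))}
    =
    {p : X → ℝ | ∃ qf : Fin m → X → ℝ,
      (∀ j : Fin m, ∃ θj : Fin a × Fin (b j) → ℝ,
        qf j = fun x =>
          (∑ yj : Yj j,
            Real.exp (∑ r : Fin a × Fin (b j), θj r * (A r.1 x * Bj j r.2 yj))) /
          ∑ x' : X, ∑ yj : Yj j,
            Real.exp (∑ r : Fin a × Fin (b j), θj r * (A r.1 x' * Bj j r.2 yj))) ∧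
      p = fun x => (∏ j : Fin m, qf j x) / ∑ x' : X, ∏ j : Fin m, qf j x'} := by
  ext p
  simp only [Set.mem_setOf_eq]
  constructor
  · rintro ⟨θ, rfl⟩
    refine ⟨fun j x =>
        (∑ yj : Yj j,
          Real.exp (∑ r : Fin a × Fin (b j), θ (r.1, ⟨j, r.2⟩) * (A r.1 x * Bj j r.2 yj))) /
        ∑ x' : X, ∑ yj : Yj j,
          Real.exp (∑ r : Fin a × Fin (b j), θ (r.1, ⟨j, r.2⟩) * (A r.1 x' * Bj j r.2 yj)),
      fun j => ⟨fun r => θ (r.1, ⟨j, r.2⟩), rfl⟩, ?_⟩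
    exact model_eq hB θ
  · rintro ⟨qf, hqf, rfl⟩
    choose θj hθj using hqf
    refine ⟨fun r => θj r.2.1 (r.1, r.2.2), ?_⟩
    have : qf = fun j x =>
        (∑ yj : Yj j,
          Real.exp (∑ r : Fin a × Fin (b j), θj j (r.1, r.2) * (A r.1 x * Bj j r.2 yj))) /
        ∑ x' : X, ∑ yj : Yj j,
          Real.exp (∑ r : Fin a × Fin (b j), θj j (r.1, r.2) * (A r.1 x' * Bj j r.2 yj)) := by
      funext j; rw [hθj j]
    rw [this, model_eq hB]
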